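/- Let X be a topological vector space over ℝ or ℂ and let {x_n} be a sequence in X such that x_n → 0 and the series ∑ a_n x_n converges for every a ∈ ℓ¹. If D is the closed balanced convex hull of {x_n : n ∈ ℕ}, then D is compact. -/

import Mathlib

open Filter Set Topology Pointwise

/-- Convex combination with total weight at most one, in a convex set containing zero. -/
private lemma aux_conv {X : Type*} [AddCommGroup X] [Module ℝ X] {V : Set X}
    (hVc : Convex ℝ V) (h0 : (0:X) ∈ V) {s : Finset ℕ} {w : ℕ → ℝ} {z : ℕ → X}
    (hw0 : ∀ n ∈ s, 0 ≤ w n) (hw1 : ∑ n ∈ s, w n ≤ 1) (hz : ∀ n ∈ s, z n ∈ V) :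
    (∑ n ∈ s, w n • z n) ∈ V := by
  rcases eq_or_lt_of_le (Finset.sum_nonneg hw0) with h | h
  · have hz0 : ∀ n ∈ s, w n = 0 := (Finset.sum_eq_zero_iff_of_nonneg hw0).1 h.symm
    rw [Finset.sum_eq_zero fun n hn => by rw [hz0 n hn, zero_smul]]
    exact h0
  · have hne : (∑ n ∈ s, w n) ≠ 0 := h.ne'
    have hmem : (∑ n ∈ s, (w n / (∑ m ∈ s, w m)) • z n) ∈ V := by
      refine hVc.sum_mem (fun n hn => div_nonneg (hw0 n hn) (le_of_lt h)) ?_ hz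
      rw [← Finset.sum_div, div_self hne]
    have := hVc.smul_mem_of_zero_mem h0 hmem (Set.mem_Icc.2 ⟨le_of_lt h, hw1⟩)
    rw [Finset.smul_sum] at this
    convert this using 2 with n
    rw [smul_smul, mul_div_cancel₀ _ hne]

/-- "Absolutely convex combination" with ℓ¹-weight at most one stays in an
absolutely convex set containing zero. -/
private lemma aux_bal {𝕜 : Type*} [RCLike 𝕜] {X : Type*} [AddCommGroup X] [Module 𝕜 X]
    [Module ℝ X] [IsScalarTower ℝ 𝕜 X] {V : Set X}
    (hVb : Balanced 𝕜 V) (hVc : Convex ℝ V) (h0 : (0:X) ∈ V)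
    {s : Finset ℕ} {c : ℕ → 𝕜} {y : ℕ → X} (hc : ∑ n ∈ s, ‖c n‖ ≤ 1)
    (hy : ∀ n ∈ s, y n ∈ V) : (∑ n ∈ s, c n • y n) ∈ V := by
  have key : ∀ n ∈ s, c n • y n
      = ‖c n‖ • ((if c n = 0 then (0:𝕜) else ((‖c n‖⁻¹ : ℝ) • c n)) • y n) := by
    intro n hn
    by_cases hcn : c n = 0
    · simp [hcn]
    · rw [if_neg hcn, ← smul_assoc, smul_smul, mul_inv_cancel₀ (norm_ne_zero_iff.2 hcn), one_smul]
  rw [Finset.sum_congr rfl key]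
  refine aux_conv hVc h0 (fun n _ => norm_nonneg _) hc ?_
  intro n hn
  by_cases hcn : c n = 0
  · rw [if_pos hcn, zero_smul]; exact h0
  · rw [if_neg hcn]
    refine hVb.smul_mem ?_ (hy n hn)
    rw [norm_smul]
    simp [norm_inv, inv_mul_cancel₀ (norm_ne_zero_iff.2 hcn)]

private lemma aux_closure_add {X : Type*} [AddCommGroup X] [TopologicalSpace X]
    [IsTopologicalAddGroup X] {V W : Set X} (hW : W ∈ 𝓝 (0:X)) {y : X}
    (hy : y ∈ closure V) : y ∈ V + W := by
  have hcont : Filter.Tendsto (fun z => y - z) (𝓝 y) (𝓝 (0:X)) := by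
    have h := Filter.Tendsto.sub
      (tendsto_const_nhds : Filter.Tendsto (fun _ : X => y) (𝓝 y) (𝓝 y))
      (tendsto_id : Filter.Tendsto id (𝓝 y) (𝓝 y))
    rwa [sub_self] at h
  have hW' : (fun z => y - z) ⁻¹' W ∈ 𝓝 y := hcont hW
  rcases mem_closure_iff_nhds.1 hy _ hW' with ⟨v, hv1, hv2⟩
  exact ⟨v, hv2, y - v, hv1, by show v + (y - v) = y; rw [add_comm, sub_add_cancel]⟩

private lemma aux_basis {𝕜 : Type*} [RCLike 𝕜] {X : Type*} [AddCommGroup X] [Module 𝕜 X]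
    [TopologicalSpace X] [IsTopologicalAddGroup X] [ContinuousSMul 𝕜 X]
    [Module ℝ X] [IsScalarTower ℝ 𝕜 X] [LocallyConvexSpace ℝ X] :
    (𝓝 (0:X)).HasBasis (fun s : Set X => s ∈ 𝓝 (0:X) ∧ Balanced 𝕜 s ∧ Convex ℝ s) id := by
  haveI : SMulCommClass ℝ 𝕜 X := IsScalarTower.to_smulCommClass
  refine (LocallyConvexSpace.convex_basis_zero ℝ X).to_hasBasis (fun s hs => ?_)
    fun s hs => ⟨s, ⟨hs.1, hs.2.2⟩, rfl.subset⟩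
  refine ⟨convexHull ℝ (balancedCore 𝕜 s), ⟨Filter.mem_of_superset
    (balancedCore_mem_nhds_zero hs.1) (subset_convexHull ℝ _), ?_, convex_convexHull ℝ _⟩,
    convexHull_min (balancedCore_subset s) hs.2⟩
  have hb := balancedCore_balanced (𝕜 := 𝕜) s
  suffices Convex ℝ {x | ∀ a : 𝕜, ‖a‖ ≤ 1 → a • x ∈ convexHull ℝ (balancedCore 𝕜 s)} by
    rw [balanced_iff_smul_mem] at hb ⊢
    refine fun a ha x hx => convexHull_min ?_ this hx a ha
    exact fun y hy a ha => subset_convexHull ℝ _ (hb ha hy)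
  intro x hx y hy u v hu hv huv a ha
  rw [smul_add, ← smul_comm u, ← smul_comm v]
  exact convex_convexHull ℝ _ (hx a ha) (hy a ha) hu hv huv

/-- The closed convex balanced hull of an ℓ¹-sequence in a locally convex
topological vector space is compact. -/
theorem stmt_0 {𝕜 : Type*} [RCLike 𝕜] {X : Type*} [AddCommGroup X] [Module 𝕜 X]
    [TopologicalSpace X] [IsTopologicalAddGroup X] [ContinuousSMul 𝕜 X]
    [Module ℝ X] [IsScalarTower ℝ 𝕜 X] [LocallyConvexSpace ℝ X]
    (x : ℕ → X) (hx0 : Filter.Tendsto x Filter.atTop (nhds 0))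
    (hxsum : ∀ a : ℕ → 𝕜, Summable (fun n => ‖a n‖) →
      ∃ s : X, Filter.Tendsto (fun N => ∑ n ∈ Finset.range N, a n • x n)
        Filter.atTop (nhds s)) :
    IsCompact (closure (convexHull ℝ (balancedHull 𝕜 (Set.range x)))) := by
  classical
  haveI : ProperSpace 𝕜 := FiniteDimensional.proper_rclike 𝕜 𝕜
  haveI : ContinuousSMul ℝ X := by
    constructor
    have heq : (fun p : ℝ × X => p.1 • p.2)
        = fun p : ℝ × X => (algebraMap ℝ 𝕜 p.1) • p.2 := by
      funext p; rw [algebraMap_smul]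
    rw [heq]
    exact ((continuous_algebraMap ℝ 𝕜).comp continuous_fst).smul continuous_snd
  -- The "unit ball" of ℓ¹ with the topology of pointwise convergence.
  set B : Set (ℕ → 𝕜) := {a | ∀ N, ∑ n ∈ Finset.range N, ‖a n‖ ≤ 1} with hBdef
  have hBcomp : IsCompact B := by
    have hsub : B ⊆ Set.pi Set.univ (fun _ : ℕ => Metric.closedBall (0:𝕜) 1) := by
      intro a ha n _
      rw [Metric.mem_closedBall, dist_zero_right]
      calc ‖a n‖ ≤ ∑ m ∈ Finset.range (n+1), ‖a m‖ :=
            Finset.single_le_sum (fun m _ => norm_nonneg _) (Finset.self_mem_range_succ n)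
        _ ≤ 1 := ha (n+1)
    have hclosed : IsClosed B := by
      have : B = ⋂ N, {a : ℕ → 𝕜 | ∑ n ∈ Finset.range N, ‖a n‖ ≤ 1} := by
        ext a; simp [hBdef, Set.mem_iInter]
      rw [this]
      refine isClosed_iInter fun N => isClosed_le ?_ continuous_const
      exact continuous_finset_sum _ fun n _ => (continuous_apply n).norm
    exact IsCompact.of_isClosed_subset
      (isCompact_univ_pi fun _ => isCompact_closedBall _ _) hclosed hsub
  have hsummable : ∀ a ∈ B, Summable (fun n => ‖a n‖) := fun a ha =>
    summable_of_sum_range_le (fun n => norm_nonneg _) ha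
  -- the summation map on B
  choose T hT using fun a : B => hxsum a (hsummable a a.2)
  -- continuity of T
  haveI : SMulCommClass ℝ 𝕜 X := IsScalarTower.to_smulCommClass
  have hTcont : Continuous T := by
    rw [continuous_iff_continuousAt]
    intro a
    have key : Filter.Tendsto (fun b => T b - T a) (𝓝 a) (𝓝 0) := by
      rw [(aux_basis (𝕜 := 𝕜) (X := X)).tendsto_right_iff]
      rintro W ⟨hWnhds, hWbal, hWconv⟩
      obtain ⟨V₁, hV₁, hV₁W⟩ := exists_nhds_zero_half hWnhds
      obtain ⟨V₂', hV₂', hV₂V₁⟩ := exists_nhds_zero_half hV₁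
      set V₂ : Set X := V₂' ∩ V₁ with hV₂def
      have hV₂ : V₂ ∈ 𝓝 (0:X) := Filter.inter_mem hV₂' hV₁
      obtain ⟨V₃, hV₃, hV₃V₂⟩ := exists_nhds_zero_half hV₂
      obtain ⟨V, ⟨hVnhds, hVbal, hVconv⟩, hVsub⟩ :=
        (aux_basis (𝕜 := 𝕜) (X := X)).mem_iff.1 hV₃
      have h0V : (0:X) ∈ V := mem_of_mem_nhds hVnhds
      -- choose N with the tail in V
      obtain ⟨N, hN⟩ := Filter.eventually_atTop.1 (hx0 (hVnhds))
      -- the key tail estimate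
      have tail : ∀ b : B, T b - (∑ n ∈ Finset.range N, (b:ℕ → 𝕜) n • x n) ∈ V₂ := by
        intro b
        have hmemcl : T b - (∑ n ∈ Finset.range N, (b:ℕ → 𝕜) n • x n) ∈ closure V := by
          refine mem_closure_of_tendsto ((hT b).sub tendsto_const_nhds) ?_
          filter_upwards [Filter.eventually_ge_atTop N] with M hM
          have hsum : (∑ n ∈ Finset.range M, (b:ℕ → 𝕜) n • x n)
              - (∑ n ∈ Finset.range N, (b:ℕ → 𝕜) n • x n)
              = ∑ n ∈ Finset.Ico N M, (b:ℕ → 𝕜) n • x n :=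
            (Finset.sum_Ico_eq_sub _ hM).symm
          rw [hsum]
          refine aux_bal hVbal hVconv h0V ?_ ?_
          · calc ∑ n ∈ Finset.Ico N M, ‖(b:ℕ → 𝕜) n‖
                ≤ ∑ n ∈ Finset.range M, ‖(b:ℕ → 𝕜) n‖ := by
                  refine Finset.sum_le_sum_of_subset_of_nonneg ?_
                    (fun n _ _ => norm_nonneg _)
                  rw [Finset.range_eq_Ico]
                  exact Finset.Ico_subset_Ico (Nat.zero_le N) le_rfl
              _ ≤ 1 := b.2 M
          · intro n hn
            exact hN n (Finset.mem_Ico.1 hn).1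
        have := aux_closure_add hVnhds hmemcl
        have hsub2 : V + V ⊆ V₂ := by
          rintro _ ⟨u, hu, v, hv, rfl⟩
          exact hV₃V₂ u (hVsub hu) v (hVsub hv)
        exact hsub2 this
      -- continuity of the finite part
      have hfin : Filter.Tendsto
          (fun b : B => (∑ n ∈ Finset.range N, (b:ℕ → 𝕜) n • x n)
            - (∑ n ∈ Finset.range N, (a:ℕ → 𝕜) n • x n)) (𝓝 a) (𝓝 0) := by
        have hc : Continuous fun b : B => ∑ n ∈ Finset.range N, (b:ℕ → 𝕜) n • x n := by
          refine continuous_finset_sum _ fun n _ => ?_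
          exact (((continuous_apply n).comp continuous_subtype_val)).smul continuous_const
        have h := Filter.Tendsto.sub (hc.tendsto a)
          (tendsto_const_nhds : Filter.Tendsto _ (𝓝 a)
            (𝓝 (∑ n ∈ Finset.range N, (a:ℕ → 𝕜) n • x n)))
        rwa [sub_self] at h
      filter_upwards [hfin (by exact hV₂ : V₂ ∈ 𝓝 (0:X))] with b hb
      have habc : T b - T a
          = ((∑ n ∈ Finset.range N, (b:ℕ → 𝕜) n • x n)
              - (∑ n ∈ Finset.range N, (a:ℕ → 𝕜) n • x n))
            + ((T b - (∑ n ∈ Finset.range N, (b:ℕ → 𝕜) n • x n))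
              - (T a - (∑ n ∈ Finset.range N, (a:ℕ → 𝕜) n • x n))) := by abel
      rw [habc]
      -- -(T a - S a N) ∈ V₂ since V₂ comes from a balanced-ish argument: redo
      have hnegmem : -(T a - (∑ n ∈ Finset.range N, (a:ℕ → 𝕜) n • x n)) ∈ V₂ := by
        -- use that the balanced hull argument works for -(c) as well; here use tail for a
        -- V is balanced, closure argument gives membership of the negative, too.
        have hmemcl : -(T a - (∑ n ∈ Finset.range N, (a:ℕ → 𝕜) n • x n)) ∈ closure V := by
          refine mem_closure_of_tendsto (((hT a).sub tendsto_const_nhds).neg) ?_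
          filter_upwards [Filter.eventually_ge_atTop N] with M hM
          have hsum : (∑ n ∈ Finset.range M, (a:ℕ → 𝕜) n • x n)
              - (∑ n ∈ Finset.range N, (a:ℕ → 𝕜) n • x n)
              = ∑ n ∈ Finset.Ico N M, (a:ℕ → 𝕜) n • x n :=
            (Finset.sum_Ico_eq_sub _ hM).symm
          rw [hsum, ← Finset.sum_neg_distrib]
          have : ∀ n ∈ Finset.Ico N M, -((a:ℕ → 𝕜) n • x n) = (-(a:ℕ → 𝕜) n) • x n := by
            intro n _; rw [neg_smul]
          rw [Finset.sum_congr rfl this]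
          refine aux_bal hVbal hVconv h0V ?_ ?_
          · calc ∑ n ∈ Finset.Ico N M, ‖-(a:ℕ → 𝕜) n‖
                = ∑ n ∈ Finset.Ico N M, ‖(a:ℕ → 𝕜) n‖ := by simp
              _ ≤ ∑ n ∈ Finset.range M, ‖(a:ℕ → 𝕜) n‖ := by
                  refine Finset.sum_le_sum_of_subset_of_nonneg ?_
                    (fun n _ _ => norm_nonneg _)
                  rw [Finset.range_eq_Ico]
                  exact Finset.Ico_subset_Ico (Nat.zero_le N) le_rfl
              _ ≤ 1 := a.2 M
          · intro n hn
            exact hN n (Finset.mem_Ico.1 hn).1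
        have := aux_closure_add hVnhds hmemcl
        have hsub2 : V + V ⊆ V₂ := by
          rintro _ ⟨u, hu, v, hv, rfl⟩
          exact hV₃V₂ u (hVsub hu) v (hVsub hv)
        exact hsub2 this
      have h2 : (T b - (∑ n ∈ Finset.range N, (b:ℕ → 𝕜) n • x n))
          - (T a - (∑ n ∈ Finset.range N, (a:ℕ → 𝕜) n • x n)) ∈ V₁ := by
        have := hV₂V₁ _ (tail b).1 _ hnegmem.1
        simpa [sub_eq_add_neg] using this
      exact hV₁W _ hb.2 _ h2
    have : Filter.Tendsto (fun b => (T b - T a) + T a) (𝓝 a) (𝓝 (0 + T a)) :=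
      key.add tendsto_const_nhds
    simpa [ContinuousAt] using this
  haveI : CompactSpace B := isCompact_iff_compactSpace.1 hBcomp
  have hK : IsCompact (Set.range T) := isCompact_range hTcont
  have hKcl : IsCompact (closure (Set.range T)) := hK.closure
  -- the set of all limits of partial sums with coefficients in B
  set C : Set X := {y | ∃ a : B, Filter.Tendsto
      (fun N => ∑ n ∈ Finset.range N, (a:ℕ → 𝕜) n • x n) Filter.atTop (𝓝 y)} with hCdef
  have hCsub : C ⊆ closure (Set.range T) := by
    rintro y ⟨a, ha⟩
    have hinsep : Inseparable y (T a) := by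
      have hne : (Filter.map (fun N => ∑ n ∈ Finset.range N, (a:ℕ → 𝕜) n • x n)
          Filter.atTop).NeBot := Filter.map_neBot
      by_contra hcon
      have hdisj : Disjoint (𝓝 y) (𝓝 (T a)) :=
        disjoint_nhds_nhds_iff_not_inseparable.2 hcon
      have hle : Filter.map (fun N => ∑ n ∈ Finset.range N, (a:ℕ → 𝕜) n • x n)
          Filter.atTop ≤ 𝓝 y ⊓ 𝓝 (T a) := le_inf ha (hT a)
      rw [hdisj.eq_bot] at hle
      exact hne.ne (le_bot_iff.1 hle)
    rw [hinsep.mem_closed_iff isClosed_closure]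
    exact subset_closure ⟨a, rfl⟩
  -- C contains range x
  have hCx : Set.range x ⊆ C := by
    rintro _ ⟨n, rfl⟩
    refine ⟨⟨(Pi.single n 1 : ℕ → 𝕜), ?_⟩, ?_⟩
    · intro N
      have : ∀ m ∈ Finset.range N, ‖(Pi.single n 1 : ℕ → 𝕜) m‖ = if m = n then (1:ℝ) else 0 := by
        intro m _
        by_cases h : m = n
        · subst h; simp
        · simp [Pi.single_eq_of_ne h, h]
      rw [Finset.sum_congr rfl this, Finset.sum_ite_eq' (Finset.range N) n fun _ => (1:ℝ)]
      split <;> norm_num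
    · have hev : ∀ᶠ N in Filter.atTop,
          (∑ m ∈ Finset.range N, (Pi.single n 1 : ℕ → 𝕜) m • x m) = x n := by
        filter_upwards [Filter.eventually_ge_atTop (n+1)] with N hN
        have : ∀ m ∈ Finset.range N, (Pi.single n 1 : ℕ → 𝕜) m • x m
            = if m = n then x n else 0 := by
          intro m _
          by_cases h : m = n
          · subst h; simp
          · simp [Pi.single_eq_of_ne h, h]
        rw [Finset.sum_congr rfl this, Finset.sum_ite_eq' (Finset.range N) n fun _ => x n,
          if_pos (Finset.mem_range.2 (Nat.lt_of_lt_of_le (Nat.lt_succ_self n) hN))]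
      exact Filter.Tendsto.congr' (Filter.EventuallyEq.symm hev) tendsto_const_nhds
  -- C is balanced
  have hCbal : Balanced 𝕜 C := by
    intro c hc
    rintro _ ⟨y, ⟨a, ha⟩, rfl⟩
    refine ⟨⟨fun n => c * (a:ℕ → 𝕜) n, ?_⟩, ?_⟩
    · intro N
      calc ∑ n ∈ Finset.range N, ‖c * (a:ℕ → 𝕜) n‖
          = ∑ n ∈ Finset.range N, ‖c‖ * ‖(a:ℕ → 𝕜) n‖ := by simp [norm_mul]
        _ ≤ ∑ n ∈ Finset.range N, ‖(a:ℕ → 𝕜) n‖ := by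
            refine Finset.sum_le_sum fun n _ => ?_
            exact mul_le_of_le_one_left (norm_nonneg _) hc
        _ ≤ 1 := a.2 N
    · have : (fun N => ∑ n ∈ Finset.range N, (c * (a:ℕ → 𝕜) n) • x n)
          = fun N => c • (∑ n ∈ Finset.range N, (a:ℕ → 𝕜) n • x n) := by
        funext N
        rw [Finset.smul_sum]
        exact Finset.sum_congr rfl fun n _ => by rw [mul_smul]
      rw [this]
      exact ha.const_smul c
  -- C is convex
  have hCconv : Convex ℝ C := by
    rintro _ ⟨a, ha⟩ _ ⟨b, hb⟩ s t hs ht hst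
    refine ⟨⟨fun n => s • (a:ℕ → 𝕜) n + t • (b:ℕ → 𝕜) n, ?_⟩, ?_⟩
    · intro N
      calc ∑ n ∈ Finset.range N, ‖s • (a:ℕ → 𝕜) n + t • (b:ℕ → 𝕜) n‖
          ≤ ∑ n ∈ Finset.range N, (s * ‖(a:ℕ → 𝕜) n‖ + t * ‖(b:ℕ → 𝕜) n‖) := by
            refine Finset.sum_le_sum fun n _ => ?_
            calc ‖s • (a:ℕ → 𝕜) n + t • (b:ℕ → 𝕜) n‖
                ≤ ‖s • (a:ℕ → 𝕜) n‖ + ‖t • (b:ℕ → 𝕜) n‖ := norm_add_le _ _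
              _ = s * ‖(a:ℕ → 𝕜) n‖ + t * ‖(b:ℕ → 𝕜) n‖ := by
                  rw [norm_smul, norm_smul, Real.norm_of_nonneg hs, Real.norm_of_nonneg ht]
        _ = s * (∑ n ∈ Finset.range N, ‖(a:ℕ → 𝕜) n‖)
            + t * (∑ n ∈ Finset.range N, ‖(b:ℕ → 𝕜) n‖) := by
            rw [Finset.sum_add_distrib, Finset.mul_sum, Finset.mul_sum]
        _ ≤ s * 1 + t * 1 := by
            gcongr
            · exact a.2 N
            · exact b.2 N
        _ = 1 := by rw [mul_one, mul_one, hst]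
    · have heq : (fun N => ∑ n ∈ Finset.range N,
            (s • (a:ℕ → 𝕜) n + t • (b:ℕ → 𝕜) n) • x n)
          = fun N => s • (∑ n ∈ Finset.range N, (a:ℕ → 𝕜) n • x n)
            + t • (∑ n ∈ Finset.range N, (b:ℕ → 𝕜) n • x n) := by
        funext N
        rw [Finset.smul_sum, Finset.smul_sum, ← Finset.sum_add_distrib]
        refine Finset.sum_congr rfl fun n _ => ?_
        rw [add_smul, smul_assoc, smul_assoc]
      rw [heq]
      exact (ha.const_smul s).add (hb.const_smul t)
  -- conclude
  have hDsub : convexHull ℝ (balancedHull 𝕜 (Set.range x)) ⊆ closure (Set.range T) := by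
    refine Set.Subset.trans ?_ hCsub
    refine convexHull_min ?_ hCconv
    exact Balanced.balancedHull_subset_of_subset hCbal hCx
  refine IsCompact.of_isClosed_subset hKcl isClosed_closure ?_
  calc closure (convexHull ℝ (balancedHull 𝕜 (Set.range x)))
      ⊆ closure (closure (Set.range T)) := closure_mono hDsub
    _ = closure (Set.range T) := closure_closure
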